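/- (Intermediate inequality (2.8).) Let l > 0 be noninteger. There is a constant C = C(N, l, p) > 0 such that for every bounded continuous function u : ℝ^N × ℝ → ℝ with ⟨u⟩^{(l)} < ∞ and ‖u‖_p < ∞, and for every ε > 0, one has sup_{x ∈ ℝ^N, t ≥ 0} |u(x,t)| ≤ C ε^l ⟨u⟩^{(l)} + C ε^{-(N+2)/p} ‖u‖_p. -/

import Mathlib

open MeasureTheory Finset ENNReal

/-- Parabolic norm of an increment `H = (h, τ)`: `‖h‖ + |τ|^(1/2)`. -/
noncomputable def pnormH {N : ℕ} (h : EuclideanSpace ℝ (Fin N)) (τ : ℝ) : ℝ :=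
  ‖h‖ + |τ| ^ ((1 : ℝ) / 2)

/-- `k`-th finite difference of `u` along `H = (h, τ)` at `(x, t)`. -/
noncomputable def fdiffP {N : ℕ} (u : EuclideanSpace ℝ (Fin N) × ℝ → ℝ) (k : ℕ)
    (h : EuclideanSpace ℝ (Fin N)) (τ : ℝ) (x : EuclideanSpace ℝ (Fin N)) (t : ℝ) : ℝ :=
  ∑ i ∈ Finset.range (k + 1),
    (-1 : ℝ) ^ (k - i) * (k.choose i : ℝ) * u (x + (i : ℝ) • h, t + (i : ℝ) * τ)

/-- Parabolic Hölder seminorm `⟨u⟩^{(l)}` on `ℝ^N × [0, ∞)`, with `k`-th differences. -/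
noncomputable def semiP {N : ℕ} (u : EuclideanSpace ℝ (Fin N) × ℝ → ℝ) (l : ℝ) (k : ℕ) :
    ℝ≥0∞ :=
  ⨆ (x : EuclideanSpace ℝ (Fin N)) (t : ℝ) (_ : 0 ≤ t)
    (h : EuclideanSpace ℝ (Fin N)) (τ : ℝ) (_ : 0 ≤ τ) (_ : ¬(h = 0 ∧ τ = 0)),
    ENNReal.ofReal (|fdiffP u k h τ x t| / pnormH h τ ^ l)

/-- `L^p` norm of `u` on `ℝ^N × (0, ∞)`. -/
noncomputable def lpP {N : ℕ} (u : EuclideanSpace ℝ (Fin N) × ℝ → ℝ) (p : ℝ) : ℝ≥0∞ :=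
  (∫⁻ z in {z : EuclideanSpace ℝ (Fin N) × ℝ | 0 < z.2},
    ENNReal.ofReal (|u z| ^ p)) ^ (1 / p)

/-- `M_p(u) = sup_{t ≥ 0} ‖u(·, t)‖_{L^p(ℝ^N)}`. -/
noncomputable def mpP {N : ℕ} (u : EuclideanSpace ℝ (Fin N) × ℝ → ℝ) (p : ℝ) : ℝ≥0∞ :=
  ⨆ (t : ℝ) (_ : 0 ≤ t),
    (∫⁻ x : EuclideanSpace ℝ (Fin N), ENNReal.ofReal (|u (x, t)| ^ p)) ^ (1 / p)

/-- Parabolic Hölder norm `|u|^{(l)} = sup |u| + ⟨u⟩^{(l)}` with `k = ⌊l⌋ + 1`. -/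
noncomputable def normP {N : ℕ} (u : EuclideanSpace ℝ (Fin N) × ℝ → ℝ) (l : ℝ) : ℝ≥0∞ :=
  (⨆ (x : EuclideanSpace ℝ (Fin N)) (t : ℝ) (_ : 0 ≤ t), ENNReal.ofReal |u (x, t)|) +
    semiP u l (⌊l⌋₊ + 1)

section helpers
variable {V : Type*} [NormedAddCommGroup V] [NormedSpace ℝ V]
  [MeasurableSpace V] [BorelSpace V] [FiniteDimensional ℝ V]

lemma lintegral_comp_add_smul_le (μ : Measure V) [μ.IsAddHaarMeasure]
    (G : V → ℝ≥0∞) (hG : Measurable G) (a : V) (c : ℝ) (hc : 1 ≤ c) :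
    ∫⁻ z, G (a + c • z) ∂μ ≤ ∫⁻ z, G z ∂μ := by
  have hc0 : c ≠ 0 := by intro h; rw [h] at hc; linarith
  have h1 : ∫⁻ z, G (a + c • z) ∂μ
      = ∫⁻ z, G (a + z) ∂(Measure.map (c • ·) μ) := by
    rw [lintegral_map (f := fun z => G (a + z)) (hG.comp (measurable_const_add a))
      (measurable_const_smul c)]
  rw [h1, Measure.map_addHaar_smul μ hc0, lintegral_smul_measure,
    MeasureTheory.lintegral_add_left_eq_self (fun z => G z) a]
  have h2 : ENNReal.ofReal |(c ^ Module.finrank ℝ V)⁻¹| ≤ 1 := by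
    rw [ENNReal.ofReal_le_one]
    rw [abs_inv, abs_pow]
    apply inv_le_one_of_one_le₀
    apply one_le_pow₀
    rw [abs_of_pos (by linarith)]
    exact hc
  calc ENNReal.ofReal |(c ^ Module.finrank ℝ V)⁻¹| * ∫⁻ z, G z ∂μ
      ≤ 1 * ∫⁻ z, G z ∂μ := by gcongr
    _ = _ := one_mul _

lemma holder_setLIntegral {α : Type*} [MeasurableSpace α] (μ : Measure α)
    {p q : ℝ} (hpq : p.HolderConjugate q) {f : α → ℝ≥0∞} (hf : Measurable f)
    (s : Set α) :
    ∫⁻ a in s, f a ∂μ ≤ (∫⁻ a in s, f a ^ p ∂μ) ^ (1/p) * (μ s) ^ (1/q) := by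
  have := ENNReal.lintegral_mul_le_Lp_mul_Lq (μ.restrict s) hpq
    hf.aemeasurable (aemeasurable_const (b := (1:ℝ≥0∞)))
  simpa [Measure.restrict_apply_univ] using this

lemma exists_le_avg_add {α : Type*} [MeasurableSpace α] (μ : Measure α) {s : Set α}
    (hs0 : μ s ≠ 0) {F : α → ℝ≥0∞} (hF : Measurable F) {I : ℝ≥0∞}
    (hI : ∫⁻ a in s, F a ∂μ ≤ I) (hItop : I ≠ ⊤) {δ : ℝ≥0∞} (hδ : δ ≠ 0) :
    ∃ a ∈ s, F a ≤ I / μ s + δ := by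
  by_contra hcon
  push_neg at hcon
  have h1 : (I / μ s + δ) * μ s ≤ ∫⁻ a in s, F a ∂μ := by
    rw [← setLIntegral_const s _]
    exact setLIntegral_mono hF (fun a ha => (hcon a ha).le)
  by_cases hstop : μ s = ⊤
  · have : (I / μ s + δ) * μ s = ⊤ := by
      apply ENNReal.mul_eq_top.2
      left
      constructor
      · rw [hstop]
        simp [ENNReal.add_eq_top, hδ]
      · exact hstop
    rw [this] at h1
    exact hItop (top_le_iff.1 (h1.trans hI))
  · have h2 : (I / μ s + δ) * μ s = I + δ * μ s := by
      rw [add_mul, ENNReal.div_mul_cancel hs0 hstop]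
    rw [h2] at h1
    have h3 : I < I + δ * μ s := ENNReal.lt_add_right hItop (mul_ne_zero hδ hs0)
    exact absurd (h1.trans hI) (not_le.2 h3)

end helpers

set_option maxHeartbeats 1000000 in
/-- Intermediate inequality (2.8). -/
theorem intermediate_eps_inequality_lp (N : ℕ) (hN : 1 ≤ N) (p : ℝ) (hp : 1 < p)
    (l : ℝ) (hl : 0 < l) (hlni : ∀ n : ℤ, (n : ℝ) ≠ l) :
    ∃ C : ℝ, 0 < C ∧
      ∀ u : EuclideanSpace ℝ (Fin N) × ℝ → ℝ, Continuous u →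
        Bornology.IsBounded (Set.range u) →
        semiP u l ⌈l⌉₊ < ⊤ → lpP u p < ⊤ →
        ∀ ε : ℝ, 0 < ε →
          ∀ (x : EuclideanSpace ℝ (Fin N)) (t : ℝ), 0 ≤ t →
            |u (x, t)| ≤ C * ε ^ l * (semiP u l ⌈l⌉₊).toReal +
              C * ε ^ (-(N + 2 : ℝ) / p) * (lpP u p).toReal := by
  classical
  haveI : Nonempty (Fin N) := ⟨⟨0, hN⟩⟩
  haveI hnt : Nontrivial (EuclideanSpace ℝ (Fin N)) := inferInstance
  set k := ⌈l⌉₊ with hkdef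
  set v1 : ℝ≥0∞ := volume (Metric.ball (0 : EuclideanSpace ℝ (Fin N)) 1) with hv1def
  have hv1pos : v1 ≠ 0 := (Metric.measure_ball_pos volume _ one_pos).ne'
  have hv1top : v1 ≠ ⊤ := measure_ball_lt_top.ne
  set c1 : ℝ := (v1 ^ (-(1:ℝ)/p)).toReal with hc1def
  have hc1nonneg : 0 ≤ c1 := ENNReal.toReal_nonneg
  set A : ℝ := 2 ^ k with hAdef
  have hppos : 0 < p := lt_trans one_pos hp
  refine ⟨2 ^ l + A * c1 + 1, by positivity, ?_⟩
  intro u hu hub hStop hLtop ε hε x t ht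
  set S := (semiP u l k).toReal with hSdef
  set L := (lpP u p).toReal with hLdef
  have hS0 : 0 ≤ S := ENNReal.toReal_nonneg
  have hL0 : 0 ≤ L := ENNReal.toReal_nonneg
  haveI hHaar : (volume : Measure (EuclideanSpace ℝ (Fin N) × ℝ)).IsAddHaarMeasure := by
    rw [MeasureTheory.Measure.volume_eq_prod]
    infer_instance
  -- the domain of averaging
  set Ω : Set (EuclideanSpace ℝ (Fin N) × ℝ) := (Metric.ball (0 : EuclideanSpace ℝ (Fin N)) ε) ×ˢ (Set.Ioo (0:ℝ) (ε^2)) with hΩdef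
  have hΩm : MeasurableSet Ω := measurableSet_ball.prod measurableSet_Ioo
  set m : ℝ≥0∞ := volume Ω with hmdef
  have hm_eq : m = ENNReal.ofReal (ε ^ (N+2)) * v1 := by
    rw [hmdef, hΩdef, MeasureTheory.Measure.volume_eq_prod, Measure.prod_prod,
      Measure.addHaar_ball volume (0 : EuclideanSpace ℝ (Fin N)) hε.le, Real.volume_Ioo, sub_zero]
    rw [finrank_euclideanSpace_fin]
    rw [mul_right_comm, ← ENNReal.ofReal_mul (by positivity), ← pow_add]
  have hm0 : m ≠ 0 := by
    rw [hm_eq]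
    exact mul_ne_zero (ENNReal.ofReal_pos.2 (by positivity)).ne' hv1pos
  have hmtop : m ≠ ⊤ := by
    rw [hm_eq]
    exact ENNReal.mul_ne_top ENNReal.ofReal_ne_top hv1top
  set q : ℝ := p.conjExponent with hqdef
  have hpq : p.HolderConjugate q := Real.HolderConjugate.conjExponent hp
  -- indicator version of |u|^p
  set G : EuclideanSpace ℝ (Fin N) × ℝ → ℝ≥0∞ :=
    Set.indicator {z : EuclideanSpace ℝ (Fin N) × ℝ | 0 < z.2} (fun z => ENNReal.ofReal (|u z| ^ p)) with hGdef
  have hset : MeasurableSet {z : EuclideanSpace ℝ (Fin N) × ℝ | 0 < z.2} :=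
    measurable_snd measurableSet_Ioi
  have hmeas0 : Measurable fun z : EuclideanSpace ℝ (Fin N) × ℝ => ENNReal.ofReal (|u z| ^ p) := by
    apply ENNReal.measurable_ofReal.comp
    exact (hu.abs.rpow_const (fun _ => Or.inr hppos.le)).measurable
  have hGmeas : Measurable G := hmeas0.indicator hset
  set J : ℝ≥0∞ := ∫⁻ z in {z : EuclideanSpace ℝ (Fin N) × ℝ | 0 < z.2}, ENNReal.ofReal (|u z| ^ p) with hJdef
  have hJG : ∫⁻ z, G z = J := by
    rw [hGdef, lintegral_indicator hset]
  have hlpP : lpP u p = J ^ (1/p) := rfl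
  -- per-shift Hölder bound
  have hshift : ∀ i : ℕ, 1 ≤ i →
      ∫⁻ H in Ω, ENNReal.ofReal |u ((x,t) + (i:ℝ) • H)| ≤ lpP u p * m ^ (1/q) := by
    intro i hi
    have hfi : Measurable fun H : EuclideanSpace ℝ (Fin N) × ℝ => ENNReal.ofReal |u ((x,t) + (i:ℝ) • H)| := by
      apply ENNReal.measurable_ofReal.comp
      exact (hu.comp (continuous_const.add (continuous_const_smul _))).measurable.abs
    have hpow : ∫⁻ H in Ω, (ENNReal.ofReal |u ((x,t) + (i:ℝ) • H)|) ^ p ≤ J := by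
      have hcong : ∀ H ∈ Ω, (ENNReal.ofReal |u ((x,t) + (i:ℝ) • H)|) ^ p
          = G ((x,t) + (i:ℝ) • H) := by
        rintro ⟨h, τ⟩ hH
        have hτ : 0 < τ := hH.2.1
        have hmem : ((x,t) + (i:ℝ) • (h,τ)) ∈ {z : EuclideanSpace ℝ (Fin N) × ℝ | 0 < z.2} := by
          simp only [Set.mem_setOf_eq, Prod.snd_add, Prod.smul_snd, smul_eq_mul]
          have : (0:ℝ) < (i:ℝ) * τ := by
            apply mul_pos _ hτ
            exact_mod_cast Nat.lt_of_lt_of_le Nat.zero_lt_one hi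
          linarith
        rw [hGdef, Set.indicator_of_mem hmem,
          ENNReal.ofReal_rpow_of_nonneg (abs_nonneg _) hppos.le]
      calc ∫⁻ H in Ω, (ENNReal.ofReal |u ((x,t) + (i:ℝ) • H)|) ^ p
          = ∫⁻ H in Ω, G ((x,t) + (i:ℝ) • H) :=
            setLIntegral_congr_fun hΩm hcong
        _ ≤ ∫⁻ H, G ((x,t) + (i:ℝ) • H) := setLIntegral_le_lintegral _ _
        _ ≤ ∫⁻ z, G z := lintegral_comp_add_smul_le volume G hGmeas (x,t) (i:ℝ)
            (by exact_mod_cast hi)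
        _ = J := hJG
    calc ∫⁻ H in Ω, ENNReal.ofReal |u ((x,t) + (i:ℝ) • H)|
        ≤ (∫⁻ H in Ω, (ENNReal.ofReal |u ((x,t) + (i:ℝ) • H)|) ^ p) ^ (1/p) * m ^ (1/q) :=
          holder_setLIntegral volume hpq hfi Ω
      _ ≤ J ^ (1/p) * m ^ (1/q) :=
          mul_le_mul_left (ENNReal.rpow_le_rpow hpow (by positivity)) _
      _ = lpP u p * m ^ (1/q) := by rw [hlpP]
  -- sum over i
  set s : Finset ℕ := (Finset.range (k+1)).erase 0 with hsdef
  set F : EuclideanSpace ℝ (Fin N) × ℝ → ℝ≥0∞ := fun H =>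
    ∑ i ∈ s, (k.choose i : ℝ≥0∞) * ENNReal.ofReal |u ((x,t) + (i:ℝ) • H)| with hFdef
  have hFmeas : Measurable F := by
    apply Finset.measurable_sum
    intro i _
    apply Measurable.const_mul
    apply ENNReal.measurable_ofReal.comp
    exact (hu.comp (continuous_const.add (continuous_const_smul _))).measurable.abs
  set I : ℝ≥0∞ := (2:ℝ≥0∞)^k * (lpP u p * m ^ (1/q)) with hIdef
  have hImeas : ∀ i : ℕ, Measurable fun H : EuclideanSpace ℝ (Fin N) × ℝ =>
      (k.choose i : ℝ≥0∞) * ENNReal.ofReal |u ((x,t) + (i:ℝ) • H)| := by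
    intro i
    apply Measurable.const_mul
    apply ENNReal.measurable_ofReal.comp
    exact (hu.comp (continuous_const.add (continuous_const_smul _))).measurable.abs
  have hIbound : ∫⁻ H in Ω, F H ≤ I := by
    rw [hFdef, lintegral_finset_sum _ (fun i _ => hImeas i)]
    calc ∑ i ∈ s, ∫⁻ H in Ω, (k.choose i : ℝ≥0∞) * ENNReal.ofReal |u ((x,t) + (i:ℝ) • H)|
        = ∑ i ∈ s, (k.choose i : ℝ≥0∞) * ∫⁻ H in Ω, ENNReal.ofReal |u ((x,t) + (i:ℝ) • H)| := by
          refine Finset.sum_congr rfl fun i _ => ?_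
          rw [lintegral_const_mul]
          exact ENNReal.measurable_ofReal.comp
            (hu.comp (continuous_const.add (continuous_const_smul _))).measurable.abs
      _ ≤ ∑ i ∈ s, (k.choose i : ℝ≥0∞) * (lpP u p * m ^ (1/q)) := by
          refine Finset.sum_le_sum fun i hi => ?_
          exact mul_le_mul_right (hshift i (Nat.one_le_iff_ne_zero.2 (Finset.ne_of_mem_erase hi))) _
      _ = (∑ i ∈ s, (k.choose i : ℝ≥0∞)) * (lpP u p * m ^ (1/q)) := by
          rw [Finset.sum_mul]
      _ ≤ (2:ℝ≥0∞)^k * (lpP u p * m ^ (1/q)) := by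
          refine mul_le_mul_left ?_ _
          calc ∑ i ∈ s, (k.choose i : ℝ≥0∞)
              ≤ ∑ i ∈ Finset.range (k+1), (k.choose i : ℝ≥0∞) :=
                Finset.sum_le_sum_of_subset (Finset.erase_subset _ _)
            _ = ((∑ i ∈ Finset.range (k+1), k.choose i : ℕ) : ℝ≥0∞) := by push_cast; ring
            _ = (2:ℝ≥0∞)^k := by rw [Nat.sum_range_choose]; push_cast; ring
  have hq0 : (0:ℝ) < q := hpq.symm.pos
  have hItop : I ≠ ⊤ := by
    apply ENNReal.mul_ne_top
    · exact ENNReal.pow_ne_top (by norm_num)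
    · exact ENNReal.mul_ne_top hLtop.ne (ENNReal.rpow_ne_top_of_nonneg (by positivity) hmtop)
  -- final bound via an epsilon of room
  have hεl : (0:ℝ) < ε ^ l := Real.rpow_pos_of_pos hε _
  have hεp : (0:ℝ) < ε ^ (-(N + 2 : ℝ)/p) := Real.rpow_pos_of_pos hε _
  have h2l : (0:ℝ) < 2 ^ l := Real.rpow_pos_of_pos two_pos _
  apply le_of_forall_sub_le
  intro δ hδ
  rw [sub_le_iff_le_add]
  obtain ⟨H0, hH0Ω, hFH0⟩ := exists_le_avg_add volume hm0 hFmeas hIbound hItop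
    (δ := ENNReal.ofReal δ) (ENNReal.ofReal_pos.2 hδ).ne'
  obtain ⟨h, τ⟩ := H0
  have hτpos : 0 < τ := hH0Ω.2.1
  have hτlt : τ < ε^2 := hH0Ω.2.2
  have hhlt : ‖h‖ < ε := by
    have := hH0Ω.1
    rwa [mem_ball_zero_iff] at this
  -- Step A : bound the finite difference via the seminorm
  have hpnpos : 0 < pnormH h τ := by
    have h2 : 0 < |τ| ^ ((1:ℝ)/2) := Real.rpow_pos_of_pos (abs_pos.2 hτpos.ne') _
    have h3 : 0 ≤ ‖h‖ := norm_nonneg h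
    unfold pnormH
    linarith
  have hsup : ENNReal.ofReal (|fdiffP u k h τ x t| / pnormH h τ ^ l) ≤ semiP u l k := by
    rw [semiP]
    refine le_iSup_of_le x ?_
    refine le_iSup_of_le t ?_
    refine le_iSup_of_le ht ?_
    refine le_iSup_of_le h ?_
    refine le_iSup_of_le τ ?_
    refine le_iSup_of_le hτpos.le ?_
    exact le_iSup_of_le (fun hc => hτpos.ne' hc.2) le_rfl
  have hdiv : |fdiffP u k h τ x t| / pnormH h τ ^ l ≤ S :=
    (ENNReal.ofReal_le_iff_le_toReal hStop.ne).1 hsup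
  have hpl : (0:ℝ) < pnormH h τ ^ l := Real.rpow_pos_of_pos hpnpos _
  have hfd : |fdiffP u k h τ x t| ≤ S * pnormH h τ ^ l := by
    rw [div_le_iff₀ hpl] at hdiv
    linarith
  have hpn2 : pnormH h τ ≤ 2 * ε := by
    have h4 : |τ| ^ ((1:ℝ)/2) ≤ ε := by
      have h5 : |τ| ≤ ε^2 := by
        rw [abs_of_pos hτpos]; exact hτlt.le
      have h6 : ((ε^2 : ℝ)) ^ ((1:ℝ)/2) = ε := by
        rw [← Real.rpow_natCast ε 2, ← Real.rpow_mul hε.le]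
        norm_num
      calc |τ| ^ ((1:ℝ)/2) ≤ (ε^2) ^ ((1:ℝ)/2) :=
            Real.rpow_le_rpow (abs_nonneg _) h5 (by norm_num)
        _ = ε := h6
    unfold pnormH
    linarith
  have hfd2 : |fdiffP u k h τ x t| ≤ S * (2^l * ε^l) := by
    have h7 : pnormH h τ ^ l ≤ (2*ε) ^ l := Real.rpow_le_rpow hpnpos.le hpn2 hl.le
    have h8 : ((2:ℝ)*ε) ^ l = 2^l * ε^l := Real.mul_rpow (by norm_num) hε.le
    nlinarith
  -- Step B : bound the sum of shifted values
  have hdivtop : I / m ≠ ⊤ := (ENNReal.div_lt_top hItop hm0).ne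
  have hFtop : I / m + ENNReal.ofReal δ ≠ ⊤ :=
    ENNReal.add_ne_top.2 ⟨hdivtop, ENNReal.ofReal_ne_top⟩
  have hsum_eq : F (h, τ)
      = ENNReal.ofReal (∑ i ∈ s, (k.choose i : ℝ) * |u ((x,t) + (i:ℝ) • (h,τ))|) := by
    rw [hFdef, ENNReal.ofReal_sum_of_nonneg (fun i _ => by positivity)]
    refine Finset.sum_congr rfl fun i _ => ?_
    rw [ENNReal.ofReal_mul (by positivity)]
    congr 1
    exact (ENNReal.ofReal_natCast _).symm
  have hreal : ∑ i ∈ s, (k.choose i : ℝ) * |u ((x,t) + (i:ℝ) • (h,τ))|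
      ≤ (I / m).toReal + δ := by
    have h9 := hFH0
    rw [hsum_eq] at h9
    have h10 := (ENNReal.ofReal_le_iff_le_toReal hFtop).1 h9
    rwa [ENNReal.toReal_add hdivtop ENNReal.ofReal_ne_top,
      ENNReal.toReal_ofReal hδ.le] at h10
  -- decomposition of u(x,t) via the finite difference
  have hdecomp : |u (x,t)| ≤ |fdiffP u k h τ x t|
      + ∑ i ∈ s, (k.choose i : ℝ) * |u ((x,t) + (i:ℝ) • (h,τ))| := by
    have hsplit : fdiffP u k h τ x t
        = (∑ i ∈ s, (-1:ℝ)^(k-i) * (k.choose i : ℝ) * u ((x,t) + (i:ℝ) • (h,τ)))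
          + (-1:ℝ)^k * u (x,t) := by
      rw [fdiffP, ← Finset.sum_erase_add _ _ (Finset.mem_range.2 (Nat.succ_pos k))]
      congr 1
      simp
    have h10 : (-1:ℝ)^k * u (x,t) = fdiffP u k h τ x t
        - ∑ i ∈ s, (-1:ℝ)^(k-i) * (k.choose i : ℝ) * u ((x,t) + (i:ℝ) • (h,τ)) := by
      rw [hsplit]; ring
    have h11 : |u (x,t)| = |(-1:ℝ)^k * u (x,t)| := by
      rw [abs_mul, abs_pow, abs_neg, abs_one, one_pow, one_mul]
    have h12 : |∑ i ∈ s, (-1:ℝ)^(k-i) * (k.choose i:ℝ) * u ((x,t) + (i:ℝ)•(h,τ))|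
        ≤ ∑ i ∈ s, (k.choose i:ℝ) * |u ((x,t) + (i:ℝ)•(h,τ))| := by
      refine (Finset.abs_sum_le_sum_abs _ _).trans ?_
      refine Finset.sum_le_sum fun i _ => ?_
      rw [abs_mul, abs_mul, abs_pow, abs_neg, abs_one, one_pow, one_mul, Nat.abs_cast]
    rw [h11, h10, sub_eq_add_neg]
    have h13 : |fdiffP u k h τ x t + -(∑ i ∈ s, (-1:ℝ)^(k-i) * (k.choose i : ℝ) * u ((x,t) + (i:ℝ) • (h,τ)))|
        ≤ |fdiffP u k h τ x t| + |∑ i ∈ s, (-1:ℝ)^(k-i) * (k.choose i : ℝ) * u ((x,t) + (i:ℝ) • (h,τ))| := by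
      refine (abs_add_le _ _).trans ?_
      rw [abs_neg]
    linarith
  -- compute (I/m).toReal
  have hmRpos : 0 < m.toReal := ENNReal.toReal_pos hm0 hmtop
  have hv1R : 0 < v1.toReal := ENNReal.toReal_pos hv1pos hv1top
  have hmR : m.toReal = ε^(N+2) * v1.toReal := by
    rw [hm_eq, ENNReal.toReal_mul, ENNReal.toReal_ofReal (by positivity)]
  have hImR : (I / m).toReal = 2^k * (L * m.toReal ^ ((1:ℝ)/q)) / m.toReal := by
    rw [ENNReal.toReal_div, hIdef, ENNReal.toReal_mul, ENNReal.toReal_mul,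
      ← ENNReal.toReal_rpow, ENNReal.toReal_pow, ENNReal.toReal_ofNat]
  have hIm_le : (I / m).toReal = (A * c1) * ε ^ (-(N + 2 : ℝ)/p) * L := by
    rw [hImR]
    have e1 : m.toReal ^ ((1:ℝ)/q) / m.toReal = m.toReal ^ ((1:ℝ)/q - 1) := by
      rw [Real.rpow_sub hmRpos, Real.rpow_one]
    have e2 : (1:ℝ)/q - 1 = -(1/p) := by
      have e := hpq.inv_add_inv_eq_one
      rw [inv_eq_one_div, inv_eq_one_div] at e
      linarith
    have e3 : m.toReal ^ (-(1/p) : ℝ) = ε ^ (-(N + 2 : ℝ)/p) * c1 := by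
      rw [hmR, Real.mul_rpow (by positivity) (by positivity)]
      congr 1
      · rw [← Real.rpow_natCast ε (N+2), ← Real.rpow_mul hε.le]
        congr 1
        push_cast
        ring
      · rw [hc1def, ← ENNReal.toReal_rpow]
        congr 1
        ring
    have e4 : m.toReal ^ ((1:ℝ)/q) / m.toReal = ε ^ (-(N + 2 : ℝ)/p) * c1 := by
      rw [e1, e2, e3]
    have e5 : (2:ℝ)^k * (L * m.toReal ^ ((1:ℝ)/q)) / m.toReal
        = 2^k * L * (m.toReal ^ ((1:ℝ)/q) / m.toReal) := by ring
    rw [e5, e4, hAdef]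
    ring
  -- put everything together
  have hA1 : (0:ℝ) ≤ A * c1 := by positivity
  calc |u (x,t)| ≤ |fdiffP u k h τ x t|
      + ∑ i ∈ s, (k.choose i : ℝ) * |u ((x,t) + (i:ℝ) • (h,τ))| := hdecomp
    _ ≤ S * (2^l * ε^l) + ((I / m).toReal + δ) := add_le_add hfd2 hreal
    _ = S * (2^l * ε^l) + ((A * c1) * ε ^ (-(N + 2 : ℝ)/p) * L + δ) := by rw [hIm_le]
    _ ≤ (2 ^ l + A * c1 + 1) * ε ^ l * S
        + (2 ^ l + A * c1 + 1) * ε ^ (-(N + 2 : ℝ) / p) * L + δ := by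
      have t1 : S * (2^l * ε^l) ≤ (2^l + A*c1 + 1) * ε^l * S := by
        nlinarith [mul_nonneg hεl.le hS0]
      have t2 : (A*c1) * ε ^ (-(N + 2 : ℝ)/p) * L
          ≤ (2^l + A*c1 + 1) * ε ^ (-(N + 2 : ℝ)/p) * L := by
        nlinarith [mul_nonneg hεp.le hL0]
      linarith
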